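/- Combinatorial mutation is involutive: if Q = mut_w(P,F), then P = mut_{(−w)}(Q,F). -/

import Mathlib

open Set Pointwise

noncomputable section

/-- the real vector space `N_ℝ = N ⊗ ℝ` for the lattice `N ≅ ℤᵈ` -/
abbrev RVec (d : ℕ) := Fin d → ℝ

/-- the inclusion of the lattice `N = ℤᵈ` into `N_ℝ` -/
def toR {d : ℕ} (u : Fin d → ℤ) : RVec d := fun i => (u i : ℝ)

/-- the pairing `⟨w, u⟩` of `w ∈ M = Hom(N, ℤ)` with `u ∈ N_ℝ` -/
def pairR {d : ℕ} (w : Fin d → ℤ) (u : RVec d) : ℝ := ∑ i, (w i : ℝ) * u i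

/-- `P` is a lattice polytope: the convex hull of finitely many lattice points. -/
def IsLatticePolytope {d : ℕ} (P : Set (RVec d)) : Prop :=
  ∃ S : Finset (Fin d → ℤ), S.Nonempty ∧ P = convexHull ℝ (toR '' ↑S)

/-- `w ∈ M ≅ ℤᵈ` is a primitive lattice vector -/
def IsPrimitive {d : ℕ} (w : Fin d → ℤ) : Prop := Finset.univ.gcd w = 1

/-- `w_h(P)`: the convex hull of the lattice points of `P` at height `h` with
respect to `w` -/
def heightSlice {d : ℕ} (w : Fin d → ℤ) (h : ℤ) (P : Set (RVec d)) : Set (RVec d) :=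
  convexHull ℝ (toR '' {u : Fin d → ℤ | toR u ∈ P ∧ pairR w (toR u) = (h : ℝ)})

/-- `F` is a lattice polytope lying at height `0` with respect to `w`
(a candidate factor of a polytope with respect to `w`). -/
def IsFactorShape {d : ℕ} (w : Fin d → ℤ) (F : Set (RVec d)) : Prop :=
  IsLatticePolytope F ∧ ∀ x ∈ F, pairR w x = 0

/-- The family `G` witnesses that `F` is a factor of `P` with respect to `w`:
for every negative height `h`, `G h` is a possibly empty lattice polytope satisfying
the sandwich condition `{u ∈ 𝒱(P) : ⟨w,u⟩ = h} ⊆ G h + (−h)·F ⊆ w_h(P)`,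
where `𝒱(P)` is the set of vertices (extreme points) of `P`, `+` is the Minkowski
sum (with `Q + ∅ = ∅`), and `(−h)·F` is the `(−h)`-fold Minkowski sum of `F`. -/
def IsMutationWitness {d : ℕ} (w : Fin d → ℤ) (F : Set (RVec d))
    (G : ℤ → Set (RVec d)) (P : Set (RVec d)) : Prop :=
  ∀ h : ℤ, h < 0 →
    (G h = ∅ ∨ IsLatticePolytope (G h)) ∧
    {x | x ∈ Set.extremePoints ℝ P ∧ pairR w x = (h : ℝ)} ⊆ G h + (-h : ℝ) • F ∧
    G h + (-h : ℝ) • F ⊆ heightSlice w h P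

/-- the combinatorial mutation `mut_w(P, F)` of `P` given by the vector `w`, the
factor `F` and the polytopes `{G_h}`:
`mut_w(P,F) = conv( ⋃_{h<0} G_h ∪ ⋃_{h≥0} (w_h(P) + h·F) )` -/
def mutation {d : ℕ} (w : Fin d → ℤ) (F : Set (RVec d)) (G : ℤ → Set (RVec d))
    (P : Set (RVec d)) : Set (RVec d) :=
  convexHull ℝ ((⋃ (h : ℤ) (_ : h < 0), G h) ∪
    ⋃ h : ℕ, (heightSlice w (h : ℤ) P + (h : ℝ) • F))

namespace MutAux

variable {d : ℕ}

lemma toR_add (u v : Fin d → ℤ) : toR (u + v) = toR u + toR v := by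
  funext i; simp [toR]

lemma toR_zsmul (k : ℤ) (u : Fin d → ℤ) : toR (k • u) = (k : ℝ) • toR u := by
  funext i; simp [toR]

def pairLM (w : Fin d → ℤ) : (RVec d) →ₗ[ℝ] ℝ where
  toFun := pairR w
  map_add' x y := by simp [pairR, mul_add, Finset.sum_add_distrib]
  map_smul' c x := by
    simp only [pairR, Pi.smul_apply, smul_eq_mul, RingHom.id_apply, Finset.mul_sum]
    exact Finset.sum_congr rfl fun i _ => by ring

lemma pairLM_apply (w : Fin d → ℤ) (x : RVec d) : pairLM w x = pairR w x := rfl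

def pairCLM (w : Fin d → ℤ) : (RVec d) →L[ℝ] ℝ :=
  LinearMap.toContinuousLinearMap (pairLM w)

lemma pairCLM_apply (w : Fin d → ℤ) (x : RVec d) : pairCLM w x = pairR w x := rfl

lemma pairR_add (w : Fin d → ℤ) (x y : RVec d) : pairR w (x + y) = pairR w x + pairR w y :=
  (pairLM w).map_add x y

lemma pairR_smul (w : Fin d → ℤ) (c : ℝ) (x : RVec d) : pairR w (c • x) = c * pairR w x :=
  (pairLM w).map_smul c x

lemma pairR_neg (w : Fin d → ℤ) (x : RVec d) : pairR (-w) x = - pairR w x := by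
  simp [pairR, ← Finset.sum_neg_distrib]

lemma pairR_toR (w : Fin d → ℤ) (u : Fin d → ℤ) :
    pairR w (toR u) = ((∑ i, w i * u i : ℤ) : ℝ) := by
  simp only [pairR, toR]; push_cast; rfl

lemma exists_int_pair (w : Fin d → ℤ) (u : Fin d → ℤ) :
    ∃ k : ℤ, pairR w (toR u) = (k : ℝ) := ⟨_, pairR_toR w u⟩

lemma pair_eq_on_convexHull {w : Fin d → ℤ} {s : Set (RVec d)} {c : ℝ}
    (h : ∀ x ∈ s, pairR w x = c) : ∀ x ∈ convexHull ℝ s, pairR w x = c := fun x hx =>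
  convexHull_min h (convex_hyperplane (pairLM w).isLinear c) hx

lemma heightSlice_subset {w : Fin d → ℤ} {h : ℤ} {X : Set (RVec d)} (hX : Convex ℝ X) :
    heightSlice w h X ⊆ X :=
  convexHull_min (by rintro x ⟨u, ⟨hu, _⟩, rfl⟩; exact hu) hX

lemma pair_of_mem_heightSlice {w : Fin d → ℤ} {h : ℤ} {X : Set (RVec d)} {x : RVec d}
    (hx : x ∈ heightSlice w h X) : pairR w x = (h : ℝ) :=
  pair_eq_on_convexHull (by rintro y ⟨u, ⟨_, hu⟩, rfl⟩; exact hu) x hx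

lemma heightSlice_neg (w : Fin d → ℤ) (h : ℤ) (X : Set (RVec d)) :
    heightSlice (-w) h X = heightSlice w (-h) X := by
  have hs : {u : Fin d → ℤ | toR u ∈ X ∧ pairR (-w) (toR u) = (h : ℝ)}
      = {u : Fin d → ℤ | toR u ∈ X ∧ pairR w (toR u) = ((-h : ℤ) : ℝ)} := by
    ext u
    simp only [mem_setOf_eq, pairR_neg, Int.cast_neg, and_congr_right_iff]
    intro _
    constructor
    · intro hh; linarith
    · intro hh; linarith
  unfold heightSlice
  rw [hs]

lemma lattice_finite {X : Set (RVec d)} (hX : Bornology.IsBounded X)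
    (pred : (Fin d → ℤ) → Prop) : {u : Fin d → ℤ | toR u ∈ X ∧ pred u}.Finite := by
  obtain ⟨r, hr⟩ := hX.subset_closedBall 0
  set M : ℤ := ⌈r⌉
  refine (Set.finite_Icc (fun _ : Fin d => -M) (fun _ => M)).subset ?_
  rintro u ⟨hu, -⟩
  have h1 : ‖toR u‖ ≤ r := by
    have := hr hu
    simpa [Metric.mem_closedBall, dist_zero_right] using this
  have h2 : ∀ i, |u i| ≤ M := by
    intro i
    have h3 : |(u i : ℝ)| ≤ r := by
      have := norm_le_pi_norm (toR u) i
      simp only [toR, Real.norm_eq_abs] at this ⊢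
      exact this.trans h1
    have h4 : ((|u i| : ℤ) : ℝ) ≤ (M : ℝ) := by
      rw [Int.cast_abs]
      exact h3.trans (Int.le_ceil r)
    exact_mod_cast h4
  constructor
  · intro i; exact (abs_le.mp (h2 i)).1
  · intro i; exact (abs_le.mp (h2 i)).2

lemma convexHull_eq_of_sub {A B : Set (RVec d)} (hAB : A ⊆ convexHull ℝ B)
    (hBA : B ⊆ convexHull ℝ A) : convexHull ℝ A = convexHull ℝ B :=
  Set.Subset.antisymm (convexHull_min hAB (convex_convexHull ℝ B))
    (convexHull_min hBA (convex_convexHull ℝ A))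


section Pieces

variable {w : Fin d → ℤ} {F : Set (RVec d)} {G : ℤ → Set (RVec d)} {P : Set (RVec d)}

lemma Gpiece_subset {h : ℤ} (hh : h < 0) : G h ⊆ mutation w F G P := fun x hx =>
  subset_convexHull ℝ _ (Set.mem_union_left _ (Set.mem_iUnion.mpr ⟨h, Set.mem_iUnion.mpr ⟨hh, hx⟩⟩))

lemma slicepiece_subset (m : ℕ) :
    heightSlice w (m : ℤ) P + (m : ℝ) • F ⊆ mutation w F G P := fun x hx =>
  subset_convexHull ℝ _ (Set.mem_union_right _ (Set.mem_iUnion.mpr ⟨m, hx⟩))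

lemma pair_of_mem_G {f₀ : RVec d} (hf₀ : f₀ ∈ F) (hFpair : ∀ y ∈ F, pairR w y = 0)
    (hG3 : ∀ h : ℤ, h < 0 → G h + (-h : ℝ) • F ⊆ heightSlice w h P)
    {h : ℤ} (hh : h < 0) {y : RVec d} (hy : y ∈ G h) : pairR w y = (h : ℝ) := by
  have hmem : y + (-h : ℝ) • f₀ ∈ heightSlice w h P :=
    hG3 h hh (add_mem_add hy (smul_mem_smul_set hf₀))
  have h2 := pair_of_mem_heightSlice hmem
  rw [pairR_add, pairR_smul, hFpair f₀ hf₀, mul_zero, add_zero] at h2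
  exact h2

end Pieces

lemma minkowski_cancel {A B C : Set (RVec d)} (hB : Convex ℝ B) (hBcl : IsClosed B)
    (hCne : C.Nonempty) (hCb : Bornology.IsBounded C) (hsub : A + C ⊆ B + C) : A ⊆ B := by
  intro a ha
  by_contra haB
  obtain ⟨ℓ, u₀, hBlt, hu₀⟩ := geometric_hahn_banach_closed_point hB hBcl haB
  obtain ⟨r, hr⟩ := hCb.subset_closedBall 0
  have himb : BddAbove (ℓ '' C) := by
    refine ⟨‖ℓ‖ * r, ?_⟩
    rintro y ⟨c, hc, rfl⟩
    have h1 : ‖c‖ ≤ r := by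
      have := hr hc
      simpa [Metric.mem_closedBall, dist_zero_right] using this
    calc ℓ c ≤ |ℓ c| := le_abs_self _
      _ = ‖ℓ c‖ := (Real.norm_eq_abs _).symm
      _ ≤ ‖ℓ‖ * ‖c‖ := ℓ.le_opNorm c
      _ ≤ ‖ℓ‖ * r := by
          exact mul_le_mul_of_nonneg_left h1 (norm_nonneg _)
  set s := sSup (ℓ '' C) with hs
  have hε : (0 : ℝ) < ℓ a - u₀ := by linarith
  obtain ⟨y, hy, hys⟩ := exists_lt_of_lt_csSup (hCne.image ℓ) (show s - (ℓ a - u₀) < s by linarith)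
  obtain ⟨c, hc, rfl⟩ := hy
  have hmem : a + c ∈ B + C := hsub (add_mem_add ha hc)
  rw [Set.mem_add] at hmem
  obtain ⟨b, hb, c', hc', heq⟩ := hmem
  have h1 : ℓ c' ≤ s := le_csSup himb ⟨c', hc', rfl⟩
  have h2 : ℓ b < u₀ := hBlt b hb
  have h3 : ℓ a + ℓ c = ℓ b + ℓ c' := by rw [← map_add, ← map_add, heq]
  linarith


lemma exists_exposing {P : Set (RVec d)} (S : Finset (Fin d → ℤ))
    (hPS : P = convexHull ℝ (toR '' ↑S)) {v : RVec d} (hv : v ∈ Set.extremePoints ℝ P) :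
    ∃ ℓ : (RVec d) →L[ℝ] ℝ, ∀ u ∈ P, u ≠ v → ℓ u < ℓ v := by
  classical
  set X : Set (RVec d) := toR '' ↑S with hX
  have hXfin : X.Finite := S.finite_toSet.image toR
  have hvP : v ∈ Set.extremePoints ℝ (convexHull ℝ X) := by rwa [hPS] at hv
  have hvX : v ∈ X := extremePoints_convexHull_subset hvP
  by_cases hne : (X \ {v}).Nonempty
  · set K : Set (RVec d) := convexHull ℝ (X \ {v}) with hK
    have hKcomp : IsCompact K := (hXfin.diff : (X \ {v}).Finite).isCompact_convexHull ℝ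
    have hvK : v ∉ K := by
      intro hvK
      have hsub : K ⊆ convexHull ℝ X := convexHull_mono diff_subset
      have hext : v ∈ Set.extremePoints ℝ K := by
        rw [mem_extremePoints] at hvP ⊢
        exact ⟨hvK, fun x₁ h₁ x₂ h₂ hseg => hvP.2 x₁ (hsub h₁) x₂ (hsub h₂) hseg⟩
      have := extremePoints_convexHull_subset hext
      exact this.2 rfl
    obtain ⟨ℓ, u₀, hKlt, hu₀⟩ :=
      geometric_hahn_banach_closed_point (convex_convexHull ℝ _) hKcomp.isClosed hvK
    refine ⟨ℓ, fun p hp hpv => ?_⟩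
    have hpX : p ∈ convexHull ℝ X := by rwa [hPS] at hp
    have hXeq : X = insert v (X \ {v}) := by
      rw [Set.insert_diff_singleton, Set.insert_eq_self.mpr hvX]
    rw [hXeq, convexHull_insert hne] at hpX
    rw [mem_convexJoin] at hpX
    obtain ⟨a, ha, b, hb, hseg⟩ := hpX
    rw [Set.mem_singleton_iff] at ha
    rw [ha] at hseg
    obtain ⟨t₁, t₂, ht₁, ht₂, hsum, rfl⟩ := hseg
    have hlb : ℓ b < ℓ v := lt_trans (hKlt b hb) hu₀
    rcases eq_or_lt_of_le ht₂ with h2 | h2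
    · exfalso
      apply hpv
      rw [← h2, zero_smul, add_zero, show t₁ = 1 by linarith, one_smul]
    · have : ℓ (t₁ • v + t₂ • b) = t₁ * ℓ v + t₂ * ℓ b := by
        rw [map_add, map_smul, map_smul]; rfl
      have h4 : t₁ * ℓ v + t₂ * ℓ v = ℓ v := by rw [← add_mul, hsum, one_mul]
      rw [this]
      have h5 := mul_lt_mul_of_pos_left hlb h2
      linarith
  · refine ⟨0, fun p hp hpv => ?_⟩
    exfalso
    apply hpv
    rw [Set.not_nonempty_iff_eq_empty, Set.diff_eq_empty] at hne
    have hXv : X = {v} := Set.Subset.antisymm hne (Set.singleton_subset_iff.mpr hvX)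
    rw [hPS] at hp
    rw [hXv, convexHull_singleton] at hp
    exact hp


lemma mutation_finite_hull (w : Fin d → ℤ) (F : Set (RVec d)) (G : ℤ → Set (RVec d))
    (P : Set (RVec d)) (hPb : Bornology.IsBounded P)
    (T : Finset (Fin d → ℤ)) (hT : F = convexHull ℝ (toR '' ↑T)) (hFne : F.Nonempty)
    (hG1 : ∀ h : ℤ, h < 0 → G h = ∅ ∨ IsLatticePolytope (G h))
    (hG3 : ∀ h : ℤ, h < 0 → G h + (-h : ℝ) • F ⊆ heightSlice w h P) :
    ∃ B : Set (RVec d), B.Finite ∧ mutation w F G P = convexHull ℝ B := by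
  classical
  have hLfin : {u : Fin d → ℤ | toR u ∈ P ∧ True}.Finite := lattice_finite hPb _
  set Hs : Set ℤ := (fun u => ∑ i, w i * u i) '' {u | toR u ∈ P ∧ True} with hHs
  have hHsfin : Hs.Finite := hLfin.image _
  have hch : ∀ h : ℤ, ∃ X : Set (RVec d), X.Finite ∧ (h < 0 → G h = convexHull ℝ X ∧ X ⊆ G h) := by
    intro h
    by_cases hh : h < 0
    · rcases hG1 h hh with hemp | ⟨S', hS'ne, hS'⟩
      · exact ⟨∅, finite_empty, fun _ => ⟨by rw [hemp, convexHull_empty], empty_subset _⟩⟩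
      · refine ⟨toR '' ↑S', S'.finite_toSet.image toR, fun _ => ⟨hS', ?_⟩⟩
        rw [hS']; exact subset_convexHull ℝ _
    · exact ⟨∅, finite_empty, fun hcon => absurd hcon hh⟩
  choose Xneg hXnegfin hXneg using hch
  set Xpos : ℤ → Set (RVec d) :=
    fun h => toR '' {u | toR u ∈ P ∧ pairR w (toR u) = (h : ℝ)} + (h : ℝ) • (toR '' ↑T)
    with hXposdef
  have hXposfin : ∀ h, (Xpos h).Finite := fun h =>
    ((lattice_finite hPb _).image toR).add ((T.finite_toSet.image toR).smul_set)
  have hslice : ∀ h : ℤ, heightSlice w h P + (h : ℝ) • F = convexHull ℝ (Xpos h) := by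
    intro h
    rw [hXposdef, convexHull_add, convexHull_smul, ← hT]
    rfl
  have hHsmem : ∀ h : ℤ, (heightSlice w h P).Nonempty → h ∈ Hs := by
    intro h hne
    have hbase : (toR '' {u : Fin d → ℤ | toR u ∈ P ∧ pairR w (toR u) = (h : ℝ)}).Nonempty := by
      by_contra hcon
      rw [Set.not_nonempty_iff_eq_empty] at hcon
      have : heightSlice w h P = ∅ := by rw [heightSlice, hcon, convexHull_empty]
      rw [this] at hne
      exact Set.not_nonempty_empty hne
    obtain ⟨y, u, ⟨huP, hupair⟩, rfl⟩ := hbase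
    refine ⟨u, ⟨huP, trivial⟩, ?_⟩
    have h1 := pairR_toR w u
    rw [hupair] at h1
    exact_mod_cast h1.symm
  refine ⟨(⋃ h ∈ Hs ∩ {h : ℤ | h < 0}, Xneg h) ∪ ⋃ h ∈ Hs ∩ {h : ℤ | 0 ≤ h}, Xpos h,
    ((hHsfin.inter_of_left _).biUnion fun h _ => hXnegfin h).union
      ((hHsfin.inter_of_left _).biUnion fun h _ => hXposfin h), ?_⟩
  unfold mutation
  apply convexHull_eq_of_sub
  · rintro y (hy | hy)
    · rw [Set.mem_iUnion] at hy
      obtain ⟨h, hy⟩ := hy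
      rw [Set.mem_iUnion] at hy
      obtain ⟨hh, hyG⟩ := hy
      have hslne : (heightSlice w h P).Nonempty := by
        have h2 : (G h + (-h : ℝ) • F).Nonempty := (Set.Nonempty.add ⟨y, hyG⟩ (hFne.smul_set))
        exact h2.mono (hG3 h hh)
      have hmemHs := hHsmem h hslne
      have h3 : y ∈ convexHull ℝ (Xneg h) := by rw [← (hXneg h hh).1]; exact hyG
      refine convexHull_mono ?_ h3
      intro x hx
      exact Set.mem_union_left _ (Set.mem_biUnion ⟨hmemHs, hh⟩ hx)
    · rw [Set.mem_iUnion] at hy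
      obtain ⟨m, hy⟩ := hy
      have hslne : (heightSlice w (m : ℤ) P).Nonempty := by
        obtain ⟨p, hp, q, hq, hpq⟩ := Set.mem_add.mp hy
        exact ⟨p, hp⟩
      have hmemHs := hHsmem _ hslne
      have h3 : y ∈ convexHull ℝ (Xpos (m : ℤ)) := by rw [← hslice]; exact hy
      refine convexHull_mono ?_ h3
      intro x hx
      exact Set.mem_union_right _ (Set.mem_biUnion ⟨hmemHs, Int.ofNat_nonneg m⟩ hx)
  · rintro x (hx | hx)
    · rw [Set.mem_iUnion₂] at hx
      obtain ⟨h, ⟨hmem, hh⟩, hx⟩ := hx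
      exact Gpiece_subset hh ((hXneg h hh).2 hx)
    · rw [Set.mem_iUnion₂] at hx
      obtain ⟨h, ⟨hmem, hh0⟩, hx⟩ := hx
      have hcast1 : ((h.toNat : ℕ) : ℤ) = h := Int.toNat_of_nonneg hh0
      have hcast2 : ((h.toNat : ℕ) : ℝ) = (h : ℝ) := by exact_mod_cast congrArg (fun z : ℤ => (z : ℝ)) hcast1
      have h1 : x ∈ heightSlice w h P + (h : ℝ) • F := by
        rw [hslice]; exact subset_convexHull ℝ _ hx
      refine slicepiece_subset h.toNat ?_
      rw [hcast1, hcast2]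
      exact h1


lemma max_sub_max (a : ℝ) : max a 0 - max (-a) 0 = a := by
  rcases le_total a 0 with h | h
  · rw [max_eq_right h, max_eq_left (neg_nonneg.mpr h)]; ring
  · rw [max_eq_left h, max_eq_right (neg_nonpos.mpr h)]; ring

lemma main_push {w : Fin d → ℤ} {F : Set (RVec d)} {G : ℤ → Set (RVec d)} {P : Set (RVec d)}
    (hPconv : Convex ℝ P) (hFconv : Convex ℝ F) {f₀ : RVec d} (hf₀ : f₀ ∈ F)
    (hFpair : ∀ y ∈ F, pairR w y = 0)
    (hG3 : ∀ h : ℤ, h < 0 → G h + (-h : ℝ) • F ⊆ heightSlice w h P)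
    {x : RVec d} (hx : x ∈ mutation w F G P) {f : RVec d} (hf : f ∈ F) :
    x + (max (-(pairR w x)) 0) • f ∈ P + (max (pairR w x) 0) • F := by
  classical
  rw [mutation] at hx
  obtain ⟨ι, hι, lam, z, hlam0, hlam1, hzmem, hsum⟩ := mem_convexHull_iff_exists_fintype.mp hx
  have hgen : ∀ i, (pairR w (z i) < 0 ∧ ∀ f' ∈ F, z i + (-(pairR w (z i))) • f' ∈ P) ∨
      (0 ≤ pairR w (z i) ∧ ∃ p ∈ P, ∃ φ ∈ F, z i = p + (pairR w (z i)) • φ) := by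
    intro i
    rcases hzmem i with hmem | hmem
    · rw [Set.mem_iUnion] at hmem
      obtain ⟨h, hmem⟩ := hmem
      rw [Set.mem_iUnion] at hmem
      obtain ⟨hh, hmemG⟩ := hmem
      have hpz : pairR w (z i) = (h : ℝ) := pair_of_mem_G hf₀ hFpair hG3 hh hmemG
      left
      refine ⟨by rw [hpz]; exact_mod_cast hh, fun f' hf' => ?_⟩
      have h1 : z i + (-h : ℝ) • f' ∈ heightSlice w h P :=
        hG3 h hh (add_mem_add hmemG (smul_mem_smul_set hf'))
      have h2 := heightSlice_subset hPconv h1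
      rw [hpz]
      exact h2
    · rw [Set.mem_iUnion] at hmem
      obtain ⟨m, hmem⟩ := hmem
      obtain ⟨p, hp, q, hq, hpq⟩ := Set.mem_add.mp hmem
      obtain ⟨φ, hφ, rfl⟩ := hq
      have hppair : pairR w p = (m : ℝ) := by
        have := pair_of_mem_heightSlice hp
        exact_mod_cast this
      have hpz : pairR w (z i) = (m : ℝ) := by
        rw [← hpq, pairR_add, pairR_smul, hFpair φ hφ, mul_zero, add_zero, hppair]
      right
      refine ⟨by rw [hpz]; positivity, p, heightSlice_subset hPconv hp, φ, hφ, ?_⟩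
      rw [hpz, ← hpq]
  set b : ι → ℝ := fun i => max (-(pairR w (z i))) 0 with hbdef
  set cc : ι → ℝ := fun i => max (pairR w (z i)) 0 with hcdef
  have hb0 : ∀ i, 0 ≤ b i := fun i => le_max_right _ _
  have hc0 : ∀ i, 0 ≤ cc i := fun i => le_max_right _ _
  have hcb : ∀ i, cc i - b i = pairR w (z i) := fun i => max_sub_max _
  set Cs : ℝ := ∑ i, lam i * cc i with hCs
  set Bs : ℝ := ∑ i, lam i * b i with hBs
  have hCs0 : 0 ≤ Cs := Finset.sum_nonneg fun i _ => mul_nonneg (hlam0 i) (hc0 i)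
  have hBs0 : 0 ≤ Bs := Finset.sum_nonneg fun i _ => mul_nonneg (hlam0 i) (hb0 i)
  have hpairsum : pairR w x = ∑ i, lam i * pairR w (z i) := by
    rw [← hsum, ← pairLM_apply, map_sum]
    exact Finset.sum_congr rfl fun i _ => by rw [map_smul, smul_eq_mul, pairLM_apply]
  have hk : pairR w x = Cs - Bs := by
    rw [hpairsum, hCs, hBs, ← Finset.sum_sub_distrib]
    exact Finset.sum_congr rfl fun i _ => by rw [← mul_sub, hcb i]
  set β : ℝ := max (-(pairR w x)) 0 with hβdef
  set γ : ℝ := max (pairR w x) 0 with hγdef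
  have hβ0 : 0 ≤ β := le_max_right _ _
  have hγ0 : 0 ≤ γ := le_max_right _ _
  have hγβ : γ - β = pairR w x := max_sub_max _
  set D : ℝ := Cs + β with hD
  have hD' : D = Bs + γ := by rw [hD]; linarith [hk, hγβ]
  have hchoice : ∀ i, ∃ pφ : (RVec d) × (RVec d), pφ.2 ∈ F ∧
      (0 ≤ pairR w (z i) → pφ.1 ∈ P ∧ z i = pφ.1 + cc i • pφ.2) := by
    intro i
    rcases hgen i with ⟨hneg, _⟩ | ⟨hpos, p, hp, φ, hφ, heq⟩
    · exact ⟨(0, f₀), hf₀, fun h => absurd h (not_le.mpr hneg)⟩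
    · refine ⟨(p, φ), hφ, fun _ => ⟨hp, ?_⟩⟩
      rw [heq]
      congr 1
      rw [hcdef]
      simp only
      rw [max_eq_left hpos]
  choose pφ hφF hposdec using hchoice
  set Φ : ι → RVec d := fun i => (pφ i).2 with hΦdef
  set φbar : RVec d := if hC : Cs = 0 then f₀ else Cs⁻¹ • ∑ i, (lam i * cc i) • Φ i with hφbar
  have hφbarF : φbar ∈ F := by
    rw [hφbar]
    split_ifs with hC
    · exact hf₀
    · have h1 : Cs⁻¹ • ∑ i, (lam i * cc i) • Φ i = ∑ i, (Cs⁻¹ * (lam i * cc i)) • Φ i := by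
        rw [Finset.smul_sum]
        exact Finset.sum_congr rfl fun i _ => by rw [smul_smul]
      rw [h1]
      refine hFconv.sum_mem (fun i _ => mul_nonneg (inv_nonneg.mpr hCs0)
        (mul_nonneg (hlam0 i) (hc0 i))) ?_ (fun i _ => hφF i)
      rw [← Finset.mul_sum, ← hCs, inv_mul_cancel₀ hC]
  have hsumφ : ∑ i, (lam i * cc i) • Φ i = Cs • φbar := by
    by_cases hC : Cs = 0
    · have hz : ∀ i ∈ Finset.univ, lam i * cc i = 0 :=
        (Finset.sum_eq_zero_iff_of_nonneg
          (fun j (_ : j ∈ Finset.univ) => mul_nonneg (hlam0 j) (hc0 j))).mp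
          (by rw [← hCs]; exact hC)
      rw [hC, zero_smul]
      exact Finset.sum_eq_zero fun i hi => by rw [hz i hi, zero_smul]
    · rw [hφbar, dif_neg hC, smul_smul, mul_inv_cancel₀ hC, one_smul]
  set μ : RVec d := if hD0 : D = 0 then f₀ else D⁻¹ • (Cs • φbar + β • f) with hμ
  have hμF : μ ∈ F := by
    rw [hμ]
    split_ifs with hD0
    · exact hf₀
    · have h1 : D⁻¹ • (Cs • φbar + β • f) = (D⁻¹ * Cs) • φbar + (D⁻¹ * β) • f := by
        rw [smul_add, smul_smul, smul_smul]
      rw [h1]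
      have hDpos : 0 < D := lt_of_le_of_ne (by rw [hD]; positivity) (Ne.symm hD0)
      exact hFconv hφbarF hf (by positivity) (by positivity)
        (by field_simp; linarith)
  have hμkey : Cs • φbar + β • f = Bs • μ + γ • μ := by
    by_cases hD0 : D = 0
    · have hDD : Cs + β = 0 := by rw [← hD]; exact hD0
      have hDD' : Bs + γ = 0 := by rw [← hD']; exact hD0
      have hC0 : Cs = 0 := by linarith
      have hβ0' : β = 0 := by linarith
      have hB0 : Bs = 0 := by linarith
      have hγ0' : γ = 0 := by linarith
      rw [hC0, hβ0', hB0, hγ0']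
      simp
    · have h2 : Bs • μ + γ • μ = D • μ := by rw [← add_smul, ← hD']
      rw [h2, hμ, dif_neg hD0, smul_smul, mul_inv_cancel₀ hD0, one_smul]
  set q : ι → RVec d := fun i => if pairR w (z i) < 0 then z i + b i • μ else (pφ i).1 with hq
  have hqP : ∀ i, q i ∈ P := by
    intro i
    rw [hq]
    simp only
    split_ifs with hneg
    · rcases hgen i with ⟨_, hall⟩ | ⟨hpos, _⟩
      · have := hall μ hμF
        have hbi : b i = -(pairR w (z i)) := by
          rw [hbdef]; simp only; rw [max_eq_left (by linarith)]
        rw [hbi]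
        exact this
      · exact absurd hpos (not_le.mpr hneg)
    · exact (hposdec i (not_lt.mp hneg)).1
  have hzq : ∀ i, lam i • z i = lam i • q i + (lam i * cc i) • Φ i - (lam i * b i) • μ := by
    intro i
    rw [hq]
    simp only
    split_ifs with hneg
    · have hc0' : cc i = 0 := by rw [hcdef]; simp only; rw [max_eq_right (le_of_lt hneg)]
      rw [hc0', mul_zero, zero_smul, add_zero, smul_add, smul_smul]
      abel
    · have hb0' : b i = 0 := by
        rw [hbdef]; simp only; rw [max_eq_right (neg_nonpos.mpr (not_lt.mp hneg))]
      have heq := (hposdec i (not_lt.mp hneg)).2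
      rw [hb0', mul_zero, zero_smul, sub_zero, heq, smul_add, mul_smul]
  have hxsum : x = (∑ i, lam i • q i) + Cs • φbar - Bs • μ := by
    rw [← hsum, Finset.sum_congr rfl (fun i _ => hzq i), Finset.sum_sub_distrib,
      Finset.sum_add_distrib, hsumφ, ← Finset.sum_smul]
  have hqbar : (∑ i, lam i • q i) ∈ P :=
    hPconv.sum_mem (fun i _ => hlam0 i) hlam1 (fun i _ => hqP i)
  have hfinal : x + β • f = (∑ i, lam i • q i) + γ • μ := by
    rw [hxsum]
    have : (∑ i, lam i • q i) + Cs • φbar - Bs • μ + β • f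
        = (∑ i, lam i • q i) + (Cs • φbar + β • f) - Bs • μ := by abel
    rw [this, hμkey]
    abel
  rw [hfinal]
  exact add_mem_add hqbar (smul_mem_smul_set hμF)


lemma mutation_def (w : Fin d → ℤ) (F : Set (RVec d)) (G : ℤ → Set (RVec d))
    (P : Set (RVec d)) : mutation w F G P =
    convexHull ℝ ((⋃ (h : ℤ) (_ : h < 0), G h) ∪
      ⋃ h : ℕ, (heightSlice w (h : ℤ) P + (h : ℝ) • F)) := rfl

end MutAux

open MutAux in
theorem mutation_involutive' {d : ℕ} (P : Set (RVec d))
    (hP : IsLatticePolytope P) (w : Fin d → ℤ)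
    (F : Set (RVec d)) (hF : IsFactorShape w F)
    (G : ℤ → Set (RVec d)) (hG : IsMutationWitness w F G P) :
    (∃ G', IsMutationWitness (-w) F G' (mutation w F G P)) ∧
      ∀ G', IsMutationWitness (-w) F G' (mutation w F G P) →
        mutation (-w) F G' (mutation w F G P) = P := by
  classical
  obtain ⟨S, hSne, hPS⟩ := hP
  obtain ⟨⟨T, hTne, hFT⟩, hFpair⟩ := hF
  have hPconv : Convex ℝ P := hPS ▸ convex_convexHull ℝ _
  have hPcomp : IsCompact P := hPS ▸ (S.finite_toSet.image toR).isCompact_convexHull ℝ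
  have hPb := hPcomp.isBounded
  have hFconv : Convex ℝ F := hFT ▸ convex_convexHull ℝ _
  have hFcomp : IsCompact F := hFT ▸ (T.finite_toSet.image toR).isCompact_convexHull ℝ
  obtain ⟨t₀, ht₀⟩ := hTne
  have hf₀ : toR t₀ ∈ F := hFT ▸ subset_convexHull ℝ _ ⟨t₀, ht₀, rfl⟩
  have hFne : F.Nonempty := ⟨toR t₀, hf₀⟩
  have hG1 : ∀ h : ℤ, h < 0 → G h = ∅ ∨ IsLatticePolytope (G h) := fun h hh => (hG h hh).1
  have hG3 : ∀ h : ℤ, h < 0 → G h + (-h : ℝ) • F ⊆ heightSlice w h P :=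
    fun h hh => (hG h hh).2.2
  set Q := mutation w F G P with hQdef
  obtain ⟨BQ, hBQfin, hQB⟩ := mutation_finite_hull w F G P hPb T hFT hFne hG1 hG3
  have hQcomp : IsCompact Q := by rw [hQdef, hQB]; exact hBQfin.isCompact_convexHull ℝ
  have hQconv : Convex ℝ Q := by rw [hQdef, hQB]; exact convex_convexHull ℝ _
  have hQb := hQcomp.isBounded
  -- pushing points of Q back into P
  have hpush : ∀ x : RVec d, x ∈ Q → ∀ f ∈ F,
      x + (max (-(pairR w x)) 0) • f ∈ P + (max (pairR w x) 0) • F :=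
    fun x hx f hf => main_push hPconv hFconv hf₀ hFpair hG3 hx hf
  -- slices of P fattened by F lie in the corresponding slice of Q
  have hSUB : ∀ k : ℤ, 0 ≤ k →
      heightSlice w k P + ((k : ℤ) : ℝ) • F ⊆ heightSlice w k Q := by
    intro k hk
    have hc1 : ((k.toNat : ℕ) : ℤ) = k := Int.toNat_of_nonneg hk
    have hc2 : ((k.toNat : ℕ) : ℝ) = ((k : ℤ) : ℝ) := by
      exact_mod_cast congrArg (fun z : ℤ => (z : ℝ)) hc1
    have hpieceQ : heightSlice w k P + ((k : ℤ) : ℝ) • F ⊆ Q := by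
      intro y hy
      refine slicepiece_subset k.toNat ?_
      rw [hc1, hc2]
      exact hy
    have hLHS : heightSlice w k P + ((k : ℤ) : ℝ) • F
        = convexHull ℝ (toR '' {u : Fin d → ℤ | toR u ∈ P ∧ pairR w (toR u) = (k : ℝ)}
            + ((k : ℤ) : ℝ) • (toR '' ↑T)) := by
      rw [convexHull_add, convexHull_smul, ← hFT]
      rfl
    rw [hLHS]
    apply convexHull_min ?_ (convex_convexHull ℝ _)
    rintro y hy
    obtain ⟨a1, ha1, b1, hb1, rfl⟩ := Set.mem_add.mp hy
    obtain ⟨u, ⟨huP, hupair⟩, rfl⟩ := ha1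
    obtain ⟨b2, ⟨t, ht, rfl⟩, rfl⟩ := hb1
    have htF : toR t ∈ F := hFT ▸ subset_convexHull ℝ _ ⟨t, ht, rfl⟩
    have heq : toR u + ((k : ℤ) : ℝ) • toR t = toR (u + k • t) := by
      rw [toR_add, toR_zsmul]
    rw [heq]
    apply subset_convexHull ℝ _
    refine ⟨u + k • t, ⟨?_, ?_⟩, rfl⟩
    · rw [← heq]
      exact hpieceQ (add_mem_add (subset_convexHull ℝ _ ⟨u, ⟨huP, hupair⟩, rfl⟩)
        (smul_mem_smul_set htF))
    · rw [← heq, pairR_add, pairR_smul, hupair, hFpair _ htF, mul_zero, add_zero]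
  -- slices of Q at nonnegative heights are contained in P + kF
  have hCOR2 : ∀ k : ℤ, 0 ≤ k → heightSlice w k Q ⊆ P + ((k : ℤ) : ℝ) • F := by
    intro k hk
    unfold heightSlice
    apply convexHull_min ?_ (hPconv.add (hFconv.smul _))
    rintro y ⟨u, ⟨huQ, hupair⟩, rfl⟩
    have h1 := hpush (toR u) huQ (toR t₀) hf₀
    have h2 : max (-(pairR w (toR u))) 0 = 0 := by
      rw [hupair]
      exact max_eq_right (neg_nonpos.mpr (by exact_mod_cast hk))
    have h3 : max (pairR w (toR u)) 0 = ((k : ℤ) : ℝ) := by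
      rw [hupair]
      exact max_eq_left (by exact_mod_cast hk)
    rw [h2, h3, zero_smul, add_zero] at h1
    exact h1
  -- slices of Q at nonpositive heights, fattened, lie in P
  have hCOR1 : ∀ m : ℕ, heightSlice w (-(m : ℤ)) Q + (m : ℝ) • F ⊆ P := by
    intro m
    rintro y hy
    obtain ⟨sl, hsl, q2, hq2, rfl⟩ := Set.mem_add.mp hy
    obtain ⟨f, hfF, rfl⟩ := hq2
    have hTconv : Convex ℝ {x : RVec d | x + (m : ℝ) • f ∈ P} := by
      intro a1 ha1 b1 hb1 ta tb hta htb htab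
      have heq2 : ta • a1 + tb • b1 + (m : ℝ) • f
          = ta • (a1 + (m : ℝ) • f) + tb • (b1 + (m : ℝ) • f) := by
        symm
        rw [smul_add, smul_add, add_add_add_comm, ← add_smul, htab, one_smul]
      show ta • a1 + tb • b1 + (m : ℝ) • f ∈ P
      rw [heq2]
      exact hPconv ha1 hb1 hta htb htab
    have hsl' : sl ∈ {x : RVec d | x + (m : ℝ) • f ∈ P} := by
      revert hsl
      have : heightSlice w (-(m : ℤ)) Q ⊆ {x : RVec d | x + (m : ℝ) • f ∈ P} := by
        unfold heightSlice
        apply convexHull_min ?_ hTconv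
        rintro y' ⟨u, ⟨huQ, hupair⟩, rfl⟩
        have h1 := hpush (toR u) huQ f hfF
        have hup : pairR w (toR u) = -(m : ℝ) := by rw [hupair]; push_cast; ring
        have h2 : max (-(pairR w (toR u))) 0 = (m : ℝ) := by
          rw [hup, neg_neg]
          exact max_eq_left (by positivity)
        have h3 : max (pairR w (toR u)) 0 = 0 := by
          rw [hup]
          exact max_eq_right (neg_nonpos.mpr (by positivity))
        rw [h2, h3, zero_smul_set hFne, add_zero] at h1
        exact h1
      exact fun hsl => this hsl
    exact hsl'
  -- any (−w)-witness family for Q consists of subsets of P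
  have hCOR3 : ∀ (G' : ℤ → Set (RVec d)), IsMutationWitness (-w) F G' Q →
      ∀ h : ℤ, h < 0 → G' h ⊆ P := by
    intro G' hG' h hh
    have hk : (0 : ℤ) ≤ -h := by omega
    have h1 : G' h + (-h : ℝ) • F ⊆ heightSlice w (-h) Q := by
      rw [← heightSlice_neg]
      exact (hG' h hh).2.2
    have h2 : heightSlice w (-h) Q ⊆ P + ((-h : ℤ) : ℝ) • F := hCOR2 (-h) hk
    have hcast : ((-h : ℤ) : ℝ) = (-h : ℝ) := by push_cast; ring
    rw [hcast] at h2
    have hCcomp : IsCompact ((-h : ℝ) • F) := by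
      rw [← Set.image_smul]
      exact hFcomp.image (continuous_const_smul _)
    exact minkowski_cancel hPconv hPcomp.isClosed (hFne.smul_set) hCcomp.isBounded
      (h1.trans h2)
  constructor
  · -- existence of a witness for Q with respect to −w
    refine ⟨fun h => heightSlice w (-h) P, ?_⟩
    intro h hh
    have hk0 : (0 : ℤ) ≤ -h := by omega
    refine ⟨?_, ?_, ?_⟩
    · have hfin : {u : Fin d → ℤ | toR u ∈ P ∧ pairR w (toR u) = ((-h : ℤ) : ℝ)}.Finite :=
        lattice_finite hPb _
      by_cases hemp : {u : Fin d → ℤ | toR u ∈ P ∧ pairR w (toR u) = ((-h : ℤ) : ℝ)} = ∅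
      · left
        show heightSlice w (-h) P = ∅
        unfold heightSlice
        rw [hemp]
        simp
      · right
        show IsLatticePolytope (heightSlice w (-h) P)
        refine ⟨hfin.toFinset, ?_, ?_⟩
        · rw [Set.Finite.toFinset_nonempty]
          exact Set.nonempty_iff_ne_empty.mpr hemp
        · unfold heightSlice
          rw [Set.Finite.coe_toFinset]
    · rintro x ⟨hxext, hxpair⟩
      show x ∈ heightSlice w (-h) P + (-h : ℝ) • F
      have hxgen := extremePoints_convexHull_subset
        (by rw [hQdef, mutation_def] at hxext; exact hxext)
      have hxwpair : pairR w x = -(h : ℝ) := by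
        rw [pairR_neg] at hxpair
        linarith
      rcases hxgen with hy | hy
      · exfalso
        rw [Set.mem_iUnion] at hy
        obtain ⟨j, hy⟩ := hy
        rw [Set.mem_iUnion] at hy
        obtain ⟨hj, hyG⟩ := hy
        have hpy : pairR w x = (j : ℝ) := pair_of_mem_G hf₀ hFpair hG3 hj hyG
        rw [hxwpair] at hpy
        have : j = -h := by exact_mod_cast hpy.symm
        omega
      · rw [Set.mem_iUnion] at hy
        obtain ⟨m, hy⟩ := hy
        have hxm : pairR w x = (m : ℝ) := by
          obtain ⟨p, hp, q2, hq2, hpq⟩ := Set.mem_add.mp hy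
          obtain ⟨φ, hφF, rfl⟩ := hq2
          have hppair : pairR w p = (m : ℝ) := by exact_mod_cast pair_of_mem_heightSlice hp
          rw [← hpq, pairR_add, pairR_smul, hFpair φ hφF, mul_zero, add_zero, hppair]
        have hm : (m : ℤ) = -h := by
          have : (m : ℝ) = -(h : ℝ) := by rw [← hxm, hxwpair]
          exact_mod_cast this
        have hmr : (m : ℝ) = -(h : ℝ) := by rw [← hxm, hxwpair]
        rw [show (-h : ℝ) = (m : ℝ) from hmr.symm, show -h = (m : ℤ) from hm.symm]
        exact hy
    · show heightSlice w (-h) P + (-h : ℝ) • F ⊆ heightSlice (-w) h Q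
      rw [heightSlice_neg]
      have hcast : ((-h : ℤ) : ℝ) = (-h : ℝ) := by push_cast; ring
      rw [← hcast]
      exact hSUB (-h) hk0
  · -- the mutation with respect to any witness recovers P
    intro G' hG'
    set R := mutation (-w) F G' Q with hRdef
    have hG1' : ∀ h : ℤ, h < 0 → G' h = ∅ ∨ IsLatticePolytope (G' h) := fun h hh => (hG' h hh).1
    have hG3' : ∀ h : ℤ, h < 0 → G' h + (-h : ℝ) • F ⊆ heightSlice (-w) h Q :=
      fun h hh => (hG' h hh).2.2
    obtain ⟨BR, hBRfin, hRB⟩ := mutation_finite_hull (-w) F G' Q hQb T hFT hFne hG1' hG3'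
    have hRcomp : IsCompact R := by rw [hRdef, hRB]; exact hBRfin.isCompact_convexHull ℝ
    have hRconv : Convex ℝ R := by rw [hRdef, hRB]; exact convex_convexHull ℝ _
    apply Set.Subset.antisymm
    · -- R ⊆ P
      rw [hRdef, mutation_def]
      apply convexHull_min ?_ hPconv
      rintro y (hy | hy)
      · rw [Set.mem_iUnion] at hy
        obtain ⟨j, hy⟩ := hy
        rw [Set.mem_iUnion] at hy
        obtain ⟨hj, hyG⟩ := hy
        exact hCOR3 G' hG' j hj hyG
      · rw [Set.mem_iUnion] at hy
        obtain ⟨m, hy⟩ := hy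
        rw [heightSlice_neg] at hy
        exact hCOR1 m hy
    · -- P ⊆ R
      have hext : Set.extremePoints ℝ P ⊆ R := by
        intro v hv
        have hvX : v ∈ toR '' ↑S := extremePoints_convexHull_subset (hPS ▸ hv)
        obtain ⟨uv, huv, hveq⟩ := hvX
        obtain ⟨kz, hkz⟩ : ∃ k : ℤ, pairR w v = (k : ℝ) := by
          rw [← hveq]; exact exists_int_pair w uv
        have hvP : v ∈ P := extremePoints_subset hv
        rcases lt_trichotomy kz 0 with hkneg | hkzero | hkpos
        · -- negative height
          have hv2 : v ∈ G kz + (-kz : ℝ) • F := (hG kz hkneg).2.1 ⟨hv, hkz⟩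
          obtain ⟨g, hg, y2, hy2, hsum2⟩ := Set.mem_add.mp hv2
          have hGsub : G kz ⊆ heightSlice w kz Q := by
            rcases hG1 kz hkneg with hemp | ⟨S1, hS1ne, hS1⟩
            · rw [hemp]; exact empty_subset _
            · rw [hS1]
              apply convexHull_min ?_ (convex_convexHull ℝ _)
              rintro y3 ⟨u3, hu3, rfl⟩
              have hy3G : toR u3 ∈ G kz := by
                rw [hS1]; exact subset_convexHull ℝ _ ⟨u3, hu3, rfl⟩
              apply subset_convexHull ℝ _
              exact ⟨u3, ⟨Gpiece_subset hkneg hy3G,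
                pair_of_mem_G hf₀ hFpair hG3 hkneg hy3G⟩, rfl⟩
          have hc1 : (((-kz).toNat : ℕ) : ℤ) = -kz := Int.toNat_of_nonneg (by omega)
          have hc2 : (((-kz).toNat : ℕ) : ℝ) = -(kz : ℝ) := by
            exact_mod_cast congrArg (fun z : ℤ => (z : ℝ)) hc1
          have hfinal : v ∈ heightSlice (-w) (((-kz).toNat : ℕ) : ℤ) Q
              + (((-kz).toNat : ℕ) : ℝ) • F := by
            rw [heightSlice_neg, hc2, show -(((-kz).toNat : ℕ) : ℤ) = kz by omega, ← hsum2]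
            exact add_mem_add (hGsub hg) hy2
          exact slicepiece_subset (w := -w) (F := F) (G := G') (P := Q) ((-kz).toNat) hfinal
        · -- zero height
          subst hkzero
          have h0 : v ∈ heightSlice w 0 P := by
            apply subset_convexHull ℝ _
            refine ⟨uv, ⟨?_, ?_⟩, hveq⟩
            · rw [hveq]; exact hvP
            · rw [hveq, hkz]
          have hvQ : v ∈ Q := by
            have := slicepiece_subset (w := w) (F := F) (G := G) (P := P) 0
            apply this
            rw [Nat.cast_zero, Nat.cast_zero, zero_smul_set hFne, add_zero]
            exact h0
          have := slicepiece_subset (w := -w) (F := F) (G := G') (P := Q) 0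
          apply this
          rw [Nat.cast_zero, Nat.cast_zero, zero_smul_set hFne, add_zero]
          apply subset_convexHull ℝ _
          refine ⟨uv, ⟨?_, ?_⟩, hveq⟩
          · rw [hveq]; exact hvQ
          · rw [pairR_neg, hveq, hkz]
            simp
        · -- positive height : the hard case
          obtain ⟨ℓ, hℓ⟩ := exists_exposing S hPS hv
          obtain ⟨fs, hfsF, hfsmax⟩ := hFcomp.exists_isMaxOn hFne ℓ.continuous.continuousOn
          set a : ℝ := ℓ fs with ha
          set lhat : (RVec d) →L[ℝ] ℝ := ℓ - a • pairCLM w with hlhat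
          have hlhat_apply : ∀ y : RVec d, lhat y = ℓ y - a * pairR w y := by
            intro y
            rw [hlhat]
            simp [pairCLM_apply]
          have hℓle : ∀ p ∈ P, ℓ p ≤ ℓ v := by
            intro p hp
            by_cases hpv : p = v
            · rw [hpv]
            · exact le_of_lt (hℓ p hp hpv)
          have hKEY : ∀ y ∈ (⋃ (j : ℤ) (_ : j < 0), G j) ∪
              ⋃ m' : ℕ, (heightSlice w (m' : ℤ) P + (m' : ℝ) • F),
              lhat y ≤ ℓ v ∧ (lhat y = ℓ v → pairR w y = (kz : ℝ)) := by
            rintro y (hy | hy)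
            · rw [Set.mem_iUnion] at hy
              obtain ⟨j, hy⟩ := hy
              rw [Set.mem_iUnion] at hy
              obtain ⟨hj, hyG⟩ := hy
              have hpy : pairR w y = (j : ℝ) := pair_of_mem_G hf₀ hFpair hG3 hj hyG
              have hyP : y + (-j : ℝ) • fs ∈ P := heightSlice_subset hPconv
                (hG3 j hj (add_mem_add hyG (smul_mem_smul_set hfsF)))
              have hcalc : lhat y = ℓ (y + (-j : ℝ) • fs) := by
                rw [map_add, map_smul, hlhat_apply, hpy, smul_eq_mul, ← ha]
                ring
              constructor
              · rw [hcalc]; exact hℓle _ hyP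
              · intro hEq
                exfalso
                have hne : y + (-j : ℝ) • fs ≠ v := by
                  intro hcon
                  have hpq : pairR w (y + (-j : ℝ) • fs) = (j : ℝ) := by
                    rw [pairR_add, pairR_smul, hFpair fs hfsF, mul_zero, add_zero, hpy]
                  rw [hcon, hkz] at hpq
                  have : kz = j := by exact_mod_cast hpq
                  omega
                have hlt := hℓ _ hyP hne
                rw [← hcalc, hEq] at hlt
                exact lt_irrefl _ hlt
            · rw [Set.mem_iUnion] at hy
              obtain ⟨m', hy⟩ := hy
              obtain ⟨p, hp, q2, hq2, hpq⟩ := Set.mem_add.mp hy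
              obtain ⟨φ, hφF, rfl⟩ := hq2
              have hppair : pairR w p = (m' : ℝ) := by
                exact_mod_cast pair_of_mem_heightSlice hp
              have hpP : p ∈ P := heightSlice_subset hPconv hp
              have hypair : pairR w y = (m' : ℝ) := by
                rw [← hpq, pairR_add, pairR_smul, hFpair φ hφF, mul_zero, add_zero, hppair]
              have hcalc : lhat y = ℓ p + (m' : ℝ) * (ℓ φ - a) := by
                rw [hlhat_apply, hypair, ← hpq, map_add, map_smul, smul_eq_mul]
                ring
              have hφle : ℓ φ ≤ a := hfsmax hφF
              have hterm : (m' : ℝ) * (ℓ φ - a) ≤ 0 :=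
                mul_nonpos_of_nonneg_of_nonpos (by positivity) (by linarith)
              constructor
              · rw [hcalc]
                linarith [hℓle p hpP]
              · intro hEq
                have hlp : ℓ p = ℓ v := by
                  have h1 := hℓle p hpP
                  rw [hcalc] at hEq
                  linarith
                have hpv : p = v := by
                  by_contra hne
                  exact absurd hlp (ne_of_lt (hℓ p hpP hne))
                rw [hypair, ← hppair, hpv, hkz]
          have hQle : ∀ x ∈ Q, lhat x ≤ ℓ v := by
            intro x hx
            have hsub := convexHull_min
              (show ((⋃ (j : ℤ) (_ : j < 0), G j) ∪
                ⋃ m' : ℕ, (heightSlice w (m' : ℤ) P + (m' : ℝ) • F))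
                  ⊆ {y : RVec d | lhat y ≤ ℓ v} from fun y hy => (hKEY y hy).1)
              (convex_halfSpace_le ⟨lhat.map_add, fun c y => lhat.map_smul c y⟩ (ℓ v))
            have hx' : x ∈ mutation w F G P := hx
            rw [mutation_def] at hx'
            exact hsub hx'
          have hvslice : v ∈ heightSlice w kz P := by
            apply subset_convexHull ℝ _
            refine ⟨uv, ⟨?_, ?_⟩, hveq⟩
            · rw [hveq]; exact hvP
            · rw [hveq, hkz]
          have hvfs : v + (kz : ℝ) • fs ∈ Q := by
            have hc1 : ((kz.toNat : ℕ) : ℤ) = kz := Int.toNat_of_nonneg (by omega)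
            have hc2 : ((kz.toNat : ℕ) : ℝ) = (kz : ℝ) := by
              exact_mod_cast congrArg (fun z : ℤ => (z : ℝ)) hc1
            refine slicepiece_subset kz.toNat ?_
            rw [hc1, hc2]
            exact add_mem_add hvslice (smul_mem_smul_set hfsF)
          have hlvfs : lhat (v + (kz : ℝ) • fs) = ℓ v := by
            rw [hlhat_apply, pairR_add, pairR_smul, hFpair fs hfsF, mul_zero, add_zero,
              hkz, map_add, map_smul, smul_eq_mul, ← ha]
            ring
          set Φs : Set (RVec d) := Q ∩ {x | ℓ v ≤ lhat x} with hΦs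
          have hΦconv : Convex ℝ Φs := hQconv.inter
            (convex_halfSpace_ge ⟨lhat.map_add, fun c y => lhat.map_smul c y⟩ (ℓ v))
          have hΦcomp : IsCompact Φs :=
            hQcomp.inter_right (isClosed_le continuous_const lhat.continuous)
          have hΦne : Φs.Nonempty := ⟨v + (kz : ℝ) • fs, hvfs, by
            rw [Set.mem_setOf_eq, hlvfs]⟩
          have hexp : IsExposed ℝ Q Φs := by
            intro _
            refine ⟨lhat, ?_⟩
            ext x
            constructor
            · rintro ⟨hxQ, hxge⟩
              exact ⟨hxQ, fun y hy => le_trans (hQle y hy) hxge⟩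
            · rintro ⟨hxQ, hmax⟩
              refine ⟨hxQ, ?_⟩
              rw [Set.mem_setOf_eq, ← hlvfs]
              exact hmax _ hvfs
          obtain ⟨e, he⟩ := hΦcomp.extremePoints_nonempty hΦne
          have heQ : e ∈ Set.extremePoints ℝ Q :=
            (hexp.isExtreme).extremePoints_subset_extremePoints he
          have heΦ : e ∈ Φs := extremePoints_subset he
          have heeq : lhat e = ℓ v := le_antisymm (hQle e heΦ.1) heΦ.2
          have hepair : pairR w e = (kz : ℝ) := by
            have heQm : e ∈ mutation w F G P := heΦ.1
            rw [mutation_def] at heQm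
            obtain ⟨ι, hι, lam, z, hlam0, hlam1, hzmem, hsum⟩ :=
              mem_convexHull_iff_exists_fintype.mp heQm
            have hlhatsum : ∑ i, lam i * lhat (z i) = ℓ v := by
              rw [← heeq, ← hsum, map_sum]
              exact Finset.sum_congr rfl fun i _ => by rw [map_smul]; rfl
            have hsum0 : ∑ i, lam i * (ℓ v - lhat (z i)) = 0 := by
              have hexpand : ∑ i, lam i * (ℓ v - lhat (z i))
                  = (∑ i, lam i * ℓ v) - ∑ i, lam i * lhat (z i) := by
                rw [← Finset.sum_sub_distrib]
                exact Finset.sum_congr rfl fun i _ => by ring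
              rw [hexpand, ← Finset.sum_mul, hlam1, one_mul, hlhatsum, sub_self]
            have hterm0 := (Finset.sum_eq_zero_iff_of_nonneg
              (fun i (_ : i ∈ Finset.univ) => mul_nonneg (hlam0 i)
                (sub_nonneg.mpr (hKEY _ (hzmem i)).1))).mp hsum0
            have hpe : pairR w e = ∑ i, lam i * pairR w (z i) := by
              rw [← hsum, ← pairLM_apply, map_sum]
              exact Finset.sum_congr rfl fun i _ => by rw [map_smul]; rfl
            rw [hpe]
            have hcongr : ∀ i ∈ Finset.univ, lam i * pairR w (z i) = lam i * (kz : ℝ) := by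
              intro i _
              rcases eq_or_ne (lam i) 0 with h0 | h0
              · rw [h0, zero_mul, zero_mul]
              · have h1 := hterm0 i (Finset.mem_univ i)
                have h2 : lhat (z i) = ℓ v := by
                  rcases mul_eq_zero.mp h1 with hcc | hcc
                  · exact absurd hcc h0
                  · linarith
                rw [(hKEY _ (hzmem i)).2 h2]
            rw [Finset.sum_congr rfl hcongr, ← Finset.sum_mul, hlam1, one_mul]
          have hkneg' : -kz < 0 := by omega
          have hscal : (-(-kz : ℤ) : ℝ) = (kz : ℝ) := by push_cast; ring
          have he2 : e ∈ G' (-kz) + (kz : ℝ) • F := by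
            rw [← hscal]
            apply (hG' (-kz) hkneg').2.1
            refine ⟨heQ, ?_⟩
            rw [pairR_neg, hepair]
            push_cast
            ring
          obtain ⟨g, hgG', y4, hy4, hesum⟩ := Set.mem_add.mp he2
          obtain ⟨f1, hf1F, rfl⟩ := hy4
          have hgP : g ∈ P := hCOR3 G' hG' (-kz) hkneg' hgG'
          have hglv : ℓ v ≤ ℓ g := by
            have h1 : ℓ e = ℓ g + (kz : ℝ) * ℓ f1 := by
              rw [← hesum, map_add, map_smul, smul_eq_mul]
            have h3 : lhat e = ℓ e - a * (kz : ℝ) := by rw [hlhat_apply, hepair]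
            have h4 : ℓ f1 ≤ a := hfsmax hf1F
            have h5 : ℓ e - a * (kz : ℝ) = ℓ v := by rw [← h3, heeq]
            nlinarith [mul_le_mul_of_nonneg_left h4 (show (0 : ℝ) ≤ (kz : ℝ) by positivity)]
          have hgv : g = v := by
            by_contra hne
            exact absurd hglv (not_le.mpr (hℓ g hgP hne))
          rw [← hgv]
          exact Gpiece_subset (w := -w) (F := F) (G := G') (P := Q) hkneg' hgG'
      rw [← closure_convexHull_extremePoints hPcomp hPconv]
      exact closure_minimal (convexHull_min hext hRconv) hRcomp.isClosed



/-- Combinatorial mutation is involutive: if `Q = mut_w(P,F)`, then `F` is also a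
factor of `Q` with respect to `−w` and `P = mut_{(−w)}(Q,F)`. -/
theorem mutation_involutive {d : ℕ} (P : Set (RVec d))
    (hP : IsLatticePolytope P) (w : Fin d → ℤ) (hw : IsPrimitive w)
    (F : Set (RVec d)) (hF : IsFactorShape w F)
    (G : ℤ → Set (RVec d)) (hG : IsMutationWitness w F G P) :
    (∃ G', IsMutationWitness (-w) F G' (mutation w F G P)) ∧
      ∀ G', IsMutationWitness (-w) F G' (mutation w F G P) →
        mutation (-w) F G' (mutation w F G P) = P :=
  mutation_involutive' P hP w F hF G hG
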